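/- Multiclass extension: let f : ℝⁿ → ℝ^k be given by f(x) = B·max(Ax,0) with A ∈ ℝ^{p×n}, B ∈ ℝ^{k×p}. For any pair of distinct classes i ≠ j, define the zonotopes Z_{ij} = Σ_{m=1}^p [(B⁺(i,m)+B⁻(j,m))·A⁺(m,:)ᵀ, (B⁺(i,m)+B⁻(j,m))·A⁻(m,:)ᵀ] + {(A⁻)ᵀ(B⁻(i,:)+B⁺(j,:))ᵀ} and Z_{ji} defined with the roles of i and j swapped. Then for every x ∈ ℝⁿ, f_i(x) − f_j(x) = sup_{z ∈ Z_{ij}} ⟨z, x⟩ − sup_{z ∈ Z_{ji}} ⟨z, x⟩, so the decision boundary between classes i and j is the set where the support functions of Z_{ij} and Z_{ji} coincide. -/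

import Mathlib

open Matrix Finset Pointwise

/-- Entrywise positive part of a matrix. -/
noncomputable def matPos {p n : ℕ} (M : Matrix (Fin p) (Fin n) ℝ) : Matrix (Fin p) (Fin n) ℝ :=
  fun i j => max (M i j) 0

/-- Entrywise negative part of a matrix. -/
noncomputable def matNeg {p n : ℕ} (M : Matrix (Fin p) (Fin n) ℝ) : Matrix (Fin p) (Fin n) ℝ :=
  fun i j => max (-(M i j)) 0

/-- Output `i` of the bias-free network `f(x) = B max(Ax, 0)`. -/
noncomputable def netOut {p n k : ℕ} (A : Matrix (Fin p) (Fin n) ℝ)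
    (B : Matrix (Fin k) (Fin p) ℝ) (i : Fin k) (x : Fin n → ℝ) : ℝ :=
  ∑ m, B i m * max (A m ⬝ᵥ x) 0

/-- The zonotope `Z_{ij}`: Minkowski sum of the line segments
`[(B⁺(i,m)+B⁻(j,m))·A⁺(m,:), (B⁺(i,m)+B⁻(j,m))·A⁻(m,:)]` shifted by
`(A⁻)ᵀ (B⁻(i,:)+B⁺(j,:))ᵀ`. -/
noncomputable def zono {p n k : ℕ} (A : Matrix (Fin p) (Fin n) ℝ)
    (B : Matrix (Fin k) (Fin p) ℝ) (i j : Fin k) : Set (Fin n → ℝ) :=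
  (∑ m : Fin p,
      segment ℝ ((matPos B i m + matNeg B j m) • matPos A m)
        ((matPos B i m + matNeg B j m) • matNeg A m))
    + ({fun t => ∑ m, matNeg A m t * (matNeg B i m + matPos B j m)} : Set (Fin n → ℝ))

lemma posSubNeg (a : ℝ) : max a 0 - max (-a) 0 = a := by
  rcases le_total a 0 with h | h
  · simp [max_eq_right h, max_eq_left (neg_nonneg.2 h)]
  · simp [max_eq_left h, max_eq_right (neg_nonpos.2 h)]

lemma Icc_add_Icc_real {a b c d : ℝ} (hab : a ≤ b) (hcd : c ≤ d) :
    Set.Icc a b + Set.Icc c d = Set.Icc (a + c) (b + d) := by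
  ext y
  constructor
  · rintro ⟨u, ⟨hu1, hu2⟩, v, ⟨hv1, hv2⟩, rfl⟩
    exact ⟨by show a + c ≤ u + v; linarith, by show u + v ≤ b + d; linarith⟩
  · rintro ⟨h1, h2⟩
    refine ⟨max a (y - d), ⟨le_max_left _ _, max_le hab (by linarith)⟩,
      y - max a (y - d), ⟨?_, ?_⟩, by ring⟩
    · have : max a (y - d) ≤ y - c := max_le (by linarith) (by linarith)
      linarith
    · have : y - d ≤ max a (y - d) := le_max_right _ _
      linarith

lemma sum_Icc_real {ι : Type*} (s : Finset ι) (l r : ι → ℝ) (h : ∀ i, l i ≤ r i) :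
    (∑ i ∈ s, Set.Icc (l i) (r i)) = Set.Icc (∑ i ∈ s, l i) (∑ i ∈ s, r i) := by
  classical
  induction s using Finset.induction with
  | empty => simp [Set.Icc_self]; rfl
  | insert _ _ hx ih =>
    rw [Finset.sum_insert hx, Finset.sum_insert hx, Finset.sum_insert hx, ih,
      Icc_add_Icc_real (h _) (Finset.sum_le_sum fun i _ => h i)]

lemma seg_real (a b : ℝ) : segment ℝ a b = Set.Icc (min a b) (max a b) := by
  rw [segment_eq_uIcc]; rfl

noncomputable def dpL {n : ℕ} (x : Fin n → ℝ) : (Fin n → ℝ) →ₗ[ℝ] ℝ where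
  toFun z := z ⬝ᵥ x
  map_add' a b := add_dotProduct a b x
  map_smul' c a := smul_dotProduct c a x

lemma support_zono {p n k : ℕ} (A : Matrix (Fin p) (Fin n) ℝ)
    (B : Matrix (Fin k) (Fin p) ℝ) (i j : Fin k) (x : Fin n → ℝ) :
    sSup ((fun z => z ⬝ᵥ x) '' zono A B i j)
      = ∑ m, (matPos B i m + matNeg B j m) * max (matPos A m ⬝ᵥ x) (matNeg A m ⬝ᵥ x)
        + ∑ m, (matNeg B i m + matPos B j m) * (matNeg A m ⬝ᵥ x) := by
  classical
  have hL : (fun z : Fin n → ℝ => z ⬝ᵥ x) = ⇑(dpL x) := rfl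
  set c : Fin p → ℝ := fun m => matPos B i m + matNeg B j m with hc
  have hcn : ∀ m, 0 ≤ c m := fun m =>
    add_nonneg (le_max_right _ _) (le_max_right _ _)
  rw [zono, hL, Set.image_add, Set.image_finset_sum, Set.image_singleton]
  have hseg : ∀ m : Fin p,
      ⇑(dpL x) '' segment ℝ (c m • matPos A m) (c m • matNeg A m)
        = Set.Icc (min (c m * (matPos A m ⬝ᵥ x)) (c m * (matNeg A m ⬝ᵥ x)))
                  (max (c m * (matPos A m ⬝ᵥ x)) (c m * (matNeg A m ⬝ᵥ x))) := by
    intro m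
    rw [← LinearMap.coe_toAffineMap, image_segment, seg_real]
    congr 1 <;> simp [dpL, smul_dotProduct, smul_eq_mul]
  simp only [hc] at hseg
  simp only [hseg]
  rw [sum_Icc_real _ _ _ (fun m => min_le_max)]
  have hshift : (dpL x) (fun t => ∑ m, matNeg A m t * (matNeg B i m + matPos B j m))
      = ∑ m, (matNeg B i m + matPos B j m) * (matNeg A m ⬝ᵥ x) := by
    show (fun t => ∑ m, matNeg A m t * (matNeg B i m + matPos B j m)) ⬝ᵥ x = _
    simp only [dotProduct, Finset.sum_mul, Finset.mul_sum]
    rw [Finset.sum_comm]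
    exact Finset.sum_congr rfl fun m _ => Finset.sum_congr rfl fun t _ => by ring
  rw [hshift, ← Set.Icc_self, Icc_add_Icc_real (Finset.sum_le_sum fun m _ => min_le_max) le_rfl]
  rw [csSup_Icc (by
    exact add_le_add (Finset.sum_le_sum fun m _ => min_le_max) le_rfl)]
  congr 1
  exact Finset.sum_congr rfl fun m _ =>
    (mul_max_of_nonneg _ _ (hcn m)).symm

/-- Multiclass extension -/
theorem multiclass_decision_boundary_support_functions {p n k : ℕ}
    (A : Matrix (Fin p) (Fin n) ℝ) (B : Matrix (Fin k) (Fin p) ℝ)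
    (i j : Fin k) (hij : i ≠ j) (x : Fin n → ℝ) :
    netOut A B i x - netOut A B j x
      = sSup ((fun z => z ⬝ᵥ x) '' zono A B i j) - sSup ((fun z => z ⬝ᵥ x) '' zono A B j i) := by
  rw [support_zono A B i j x, support_zono A B j i x]
  simp only [netOut]
  rw [← Finset.sum_add_distrib, ← Finset.sum_add_distrib, ← Finset.sum_sub_distrib,
    ← Finset.sum_sub_distrib]
  refine Finset.sum_congr rfl fun m _ => ?_
  have hsub : matPos A m - matNeg A m = A m := funext fun t => posSubNeg (A m t)
  have hpq : matPos A m ⬝ᵥ x - matNeg A m ⬝ᵥ x = A m ⬝ᵥ x := by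
    rw [← sub_dotProduct, hsub]
  have hM : max (matPos A m ⬝ᵥ x) (matNeg A m ⬝ᵥ x) - matNeg A m ⬝ᵥ x
      = max (A m ⬝ᵥ x) 0 := by
    rcases max_cases (matPos A m ⬝ᵥ x) (matNeg A m ⬝ᵥ x) with ⟨h1, h2⟩ | ⟨h1, h2⟩ <;>
      rcases max_cases (A m ⬝ᵥ x) (0 : ℝ) with ⟨g1, g2⟩ | ⟨g1, g2⟩ <;> linarith
  have hbi := posSubNeg (B i m)
  have hbj := posSubNeg (B j m)
  simp only [matPos, matNeg]
  linear_combination (matNeg A m ⬝ᵥ x - max (matPos A m ⬝ᵥ x) (matNeg A m ⬝ᵥ x)) * hbi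
    + (max (matPos A m ⬝ᵥ x) (matNeg A m ⬝ᵥ x) - matNeg A m ⬝ᵥ x) * hbj
    + (B j m - B i m) * hM
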